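/- Let (V,ρ) be a nonzero complex representation of Q and h a Hermitian metric on (V,ρ). Then the following are equivalent: (1) h is irreducible; (2) whenever (V_i,ρ_i)_{i∈I} is a finite family of subrepresentations of (V,ρ) such that (V,ρ) = ⊕_{i∈I}(V_i,ρ_i) and (V_i,ρ_i), (V_j,ρ_j) are orthogonal with respect to h for all i ≠ j, there exists i ∈ I with (V_i,ρ_i) = (V,ρ). -/

import Mathlib

open Module

variable {Q₀ Q₁ : Type*} [Fintype Q₀] [Fintype Q₁] [DecidableEq Q₀]
  (s t : Q₁ → Q₀)
  (V : Q₀ → Type*) [∀ a, NormedAddCommGroup (V a)] [∀ a, InnerProductSpace ℂ (V a)]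
  [∀ a, FiniteDimensional ℂ (V a)]

/-- `W` is a subrepresentation of the representation `(V, ρ)` of the quiver
`(Q₀, Q₁, s, t)`. -/
def IsSubrep (ρ : ∀ α, V (s α) →ₗ[ℂ] V (t α)) (W : ∀ a, Submodule ℂ (V a)) : Prop :=
  ∀ α, ∀ x ∈ W (s α), ρ α x ∈ W (t α)

/-- `f` is an endomorphism of the representation `(V, ρ)`. -/
def IsRepEndo (ρ : ∀ α, V (s α) →ₗ[ℂ] V (t α)) (f : ∀ a, V a →ₗ[ℂ] V a) : Prop :=
  ∀ α, (f (t α)) ∘ₗ (ρ α) = (ρ α) ∘ₗ (f (s α))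

/-- The representation `(V, ρ)` is Schur: every endomorphism is a scalar multiple of the
identity. -/
def IsSchurRep (ρ : ∀ α, V (s α) →ₗ[ℂ] V (t α)) : Prop :=
  ∀ f : ∀ a, V a →ₗ[ℂ] V a, IsRepEndo s t V ρ f →
    ∃ c : ℂ, ∀ a, f a = c • LinearMap.id

/-- `f` is skew-Hermitian with respect to the Hermitian metric given by the inner
products on the `V a`. -/
def IsSkewHermEndo (f : ∀ a, V a →ₗ[ℂ] V a) : Prop :=
  ∀ a, ∀ v w : V a, inner (𝕜 := ℂ) (f a v) w + inner (𝕜 := ℂ) v (f a w) = 0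

/-- The Hermitian metric on `(V, ρ)` is irreducible: every skew-Hermitian endomorphism of
`(V, ρ)` is a scalar multiple of the identity. -/
def IsIrreducibleMetric (ρ : ∀ α, V (s α) →ₗ[ℂ] V (t α)) : Prop :=
  ∀ f : ∀ a, V a →ₗ[ℂ] V a, IsRepEndo s t V ρ f → IsSkewHermEndo V f →
    ∃ c : ℂ, ∀ a, f a = c • LinearMap.id

/-- Two subrepresentations are orthogonal with respect to the Hermitian metric. -/
def OrthSubreps (W W' : ∀ a, Submodule ℂ (V a)) : Prop :=
  ∀ a, ∀ v ∈ W a, ∀ w ∈ W' a, inner (𝕜 := ℂ) v w = (0 : ℂ)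

/-- The `θ`-slope of the representation `(V, ρ)`. -/
noncomputable def repSlope (θ : Q₀ → ℝ) : ℝ :=
  (∑ a, θ a * (finrank ℂ (V a) : ℝ)) / (∑ a, (finrank ℂ (V a) : ℝ))

/-- The `θ`-slope of a subrepresentation `W`. -/
noncomputable def subSlope (θ : Q₀ → ℝ) (W : ∀ a, Submodule ℂ (V a)) : ℝ :=
  (∑ a, θ a * (finrank ℂ (W a) : ℝ)) / (∑ a, (finrank ℂ (W a) : ℝ))

/-- The representation `(V, ρ)` is `θ`-stable: it is nonzero and every nonzero proper
subrepresentation has strictly smaller `θ`-slope. -/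
noncomputable def IsStableRep (ρ : ∀ α, V (s α) →ₗ[ℂ] V (t α)) (θ : Q₀ → ℝ) : Prop :=
  (0 < ∑ a, finrank ℂ (V a)) ∧
  ∀ W : ∀ a, Submodule ℂ (V a), IsSubrep s t V ρ W →
    (∃ a, W a ≠ ⊥) → (∃ a, W a ≠ ⊤) → subSlope V θ W < repSlope V θ

/-- The subrepresentation `W` of `(V, ρ)` is `θ`-stable as a representation in its own
right: it is nonzero and every nonzero proper subrepresentation of it (i.e. every
subrepresentation of `(V, ρ)` contained in `W`) has strictly smaller `θ`-slope. -/
noncomputable def IsStableSubrep (ρ : ∀ α, V (s α) →ₗ[ℂ] V (t α)) (θ : Q₀ → ℝ)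
    (W : ∀ a, Submodule ℂ (V a)) : Prop :=
  (∃ a, W a ≠ ⊥) ∧
  ∀ W' : ∀ a, Submodule ℂ (V a), IsSubrep s t V ρ W' → (∀ a, W' a ≤ W a) →
    (∃ a, W' a ≠ ⊥) → W' ≠ W → subSlope V θ W' < subSlope V θ W

/-- The summand `ρ_α ∘ ρ_α*` of `K_θ(V,ρ,h)_a`, for an arrow `α` with target `a`. -/
noncomputable def tTerm (ρ : ∀ α, V (s α) →ₗ[ℂ] V (t α)) (a : Q₀)
    (α : {α : Q₁ // t α = a}) : Module.End ℂ (V a) :=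
  α.2 ▸ ((ρ α.1) ∘ₗ (LinearMap.adjoint (ρ α.1)))

/-- The summand `ρ_α* ∘ ρ_α` of `K_θ(V,ρ,h)_a`, for an arrow `α` with source `a`. -/
noncomputable def sTerm (ρ : ∀ α, V (s α) →ₗ[ℂ] V (t α)) (a : Q₀)
    (α : {α : Q₁ // s α = a}) : Module.End ℂ (V a) :=
  α.2 ▸ ((LinearMap.adjoint (ρ α.1)) ∘ₗ (ρ α.1))

/-- The endomorphism `K_θ(V,ρ,h)_a = θ_a id + ∑_{t(α)=a} ρ_α ρ_α* − ∑_{s(α)=a} ρ_α* ρ_α`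
of `V a`. -/
noncomputable def Kop (ρ : ∀ α, V (s α) →ₗ[ℂ] V (t α)) (θ : Q₀ → ℝ) (a : Q₀) :
    Module.End ℂ (V a) :=
  ((θ a : ℂ)) • (LinearMap.id : V a →ₗ[ℂ] V a) +
    (∑ α : {α : Q₁ // t α = a}, tTerm s t V ρ a α) -
    (∑ α : {α : Q₁ // s α = a}, sTerm s t V ρ a α)

/-- The Hermitian metric `h` on `(V, ρ)` is Einstein–Hermitian with respect to `θ`:
`K_θ(V,ρ,h)_a = c • id` for all `a`, for some constant `c ∈ ℂ`. -/
noncomputable def IsEinsteinHermitian (ρ : ∀ α, V (s α) →ₗ[ℂ] V (t α)) (θ : Q₀ → ℝ) :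
    Prop :=
  ∃ c : ℂ, ∀ a, Kop s t V ρ θ a = c • (LinearMap.id : V a →ₗ[ℂ] V a)


lemma orthProj_eq_self_of_mem' {E : Type*} [NormedAddCommGroup E] [InnerProductSpace ℂ E]
    (K : Submodule ℂ E) [K.HasOrthogonalProjection] {v : E} (h : v ∈ K) :
    (K.orthogonalProjectionOnto v : E) = v :=
  Submodule.starProjection_eq_self_iff.mpr h

section AuxProofs

variable (ρ : ∀ α, V (s α) →ₗ[ℂ] V (t α))

lemma proj_comm_aux {n : ℕ} (W : Fin n → ∀ a, Submodule ℂ (V a))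
    (hsub : ∀ i, IsSubrep s t V ρ (W i))
    (htop : ∀ a, (⨆ i, W i a) = ⊤)
    (horth : ∀ i j, i ≠ j → OrthSubreps V (W i) (W j))
    (i : Fin n) (α : Q₁) (x : V (s α)) :
    ((Submodule.orthogonalProjectionOnto (W i (t α)) (ρ α x) : V (t α))) =
      ρ α (Submodule.orthogonalProjectionOnto (W i (s α)) x) := by
  have hx : x ∈ ⨆ j, W j (s α) := by rw [htop]; exact Submodule.mem_top
  refine Submodule.iSup_induction (motive := fun y =>
      ((Submodule.orthogonalProjectionOnto (W i (t α)) (ρ α y) : V (t α))) =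
        ρ α (Submodule.orthogonalProjectionOnto (W i (s α)) y)) _ hx ?_ ?_ ?_
  · intro j y hy
    by_cases hij : j = i
    · subst hij
      rw [orthProj_eq_self_of_mem' _ (hsub j α y hy),
        orthProj_eq_self_of_mem' _ hy]
    · have h1 : y ∈ (W i (s α))ᗮ :=
        Submodule.mem_orthogonal _ _ |>.mpr fun u hu => horth i j (Ne.symm hij) (s α) u hu y hy
      have h2 : ρ α y ∈ (W i (t α))ᗮ :=
        Submodule.mem_orthogonal _ _ |>.mpr fun u hu =>
          horth i j (Ne.symm hij) (t α) u hu (ρ α y) (hsub j α y hy)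
      rw [Submodule.orthogonalProjectionOnto_apply_of_mem_orthogonal h1,
        Submodule.orthogonalProjectionOnto_apply_of_mem_orthogonal h2]
      simp
  · simp
  · intro y z hy hz
    simp only [map_add, Submodule.coe_add, hy, hz]

end AuxProofs

/-- for a nonzero representation `(V, ρ)` of a nonempty finite quiver with
Hermitian metric `h` (given by the inner products), `h` is irreducible iff every finite
orthogonal direct-sum decomposition of `(V, ρ)` into subrepresentations is trivial. -/
theorem irreducibleMetric_iff_no_orthogonal_decomposition
    {Q₀ Q₁ : Type*} [Fintype Q₀] [Fintype Q₁] [Nonempty Q₀] [DecidableEq Q₀]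
    (s t : Q₁ → Q₀)
    (V : Q₀ → Type*) [∀ a, NormedAddCommGroup (V a)] [∀ a, InnerProductSpace ℂ (V a)]
    [∀ a, FiniteDimensional ℂ (V a)]
    (ρ : ∀ α, V (s α) →ₗ[ℂ] V (t α))
    (hnz : 0 < ∑ a, Module.finrank ℂ (V a)) :
    IsIrreducibleMetric s t V ρ ↔
      ∀ (n : ℕ) (W : Fin n → ∀ a, Submodule ℂ (V a)),
        (∀ i, IsSubrep s t V ρ (W i)) →
        (∀ a, (⨆ i, W i a) = ⊤) →
        (∀ i j, i ≠ j → OrthSubreps V (W i) (W j)) →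
        ∃ i, ∀ a, W i a = ⊤ := by
  obtain ⟨a₀, ha₀⟩ : ∃ a, Module.finrank ℂ (V a) ≠ 0 := by
    by_contra h
    push_neg at h
    simp [h] at hnz
  haveI : Nontrivial (V a₀) := Module.nontrivial_of_finrank_pos (Nat.pos_of_ne_zero ha₀)
  obtain ⟨x₀, hx₀⟩ := exists_ne (0 : V a₀)
  constructor
  · intro hirr n W hsub htop horth
    set P : Fin n → ∀ a, V a →ₗ[ℂ] V a := fun i a =>
      (W i a).subtype ∘ₗ ((Submodule.orthogonalProjectionOnto (W i a) : V a →L[ℂ] W i a) :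
        V a →ₗ[ℂ] W i a) with hP
    have hPapp : ∀ i a (y : V a), P i a y = (Submodule.orthogonalProjectionOnto (W i a) y : V a) := by
      intro i a y; rfl
    have hPmem : ∀ i a (y : V a), P i a y ∈ W i a := by
      intro i a y; rw [hPapp]; exact Submodule.coe_mem _
    have hrep : ∀ i, IsRepEndo s t V ρ (fun a => Complex.I • P i a) := by
      intro i α
      ext x
      simp only [LinearMap.comp_apply, LinearMap.smul_apply]
      rw [hPapp, hPapp, proj_comm_aux s t V ρ W hsub htop horth i α x, map_smul]
    have hskew : ∀ i, IsSkewHermEndo V (fun a => Complex.I • P i a) := by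
      intro i a v w
      simp only [LinearMap.smul_apply]
      rw [inner_smul_left, inner_smul_right]
      have hsa : inner (𝕜 := ℂ) (P i a v) w = inner (𝕜 := ℂ) v (P i a w) := by
        rw [hPapp, hPapp]
        exact Submodule.inner_starProjection_left_eq_right (W i a) v w
      rw [hsa, Complex.conj_I]
      ring
    have hc : ∀ i, ∃ d : ℂ, ∀ a, P i a = d • LinearMap.id := by
      intro i
      obtain ⟨c, hc⟩ := hirr _ (hrep i) (hskew i)
      refine ⟨-Complex.I * c, fun a => ?_⟩
      ext y
      have h1 : Complex.I • P i a y = c • y := by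
        have := LinearMap.congr_fun (hc a) y
        simpa using this
      have h3 : (-Complex.I) • (Complex.I • P i a y) = (-Complex.I) • (c • y) := by rw [h1]
      simpa [smul_smul, neg_mul, Complex.I_mul_I] using h3
    choose d hd using hc
    have hd01 : ∀ i, d i = 0 ∨ d i = 1 := by
      intro i
      have hidem : P i a₀ (P i a₀ x₀) = P i a₀ x₀ := by
        rw [hPapp i a₀ (P i a₀ x₀), orthProj_eq_self_of_mem' _ (hPmem i a₀ x₀)]
      rw [hd i a₀] at hidem
      simp only [LinearMap.smul_apply, LinearMap.id_apply, smul_smul] at hidem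
      have h0 : (d i * d i - d i) • x₀ = 0 := by rw [sub_smul, hidem, sub_self]
      rcases smul_eq_zero.mp h0 with h | h
      · have hm : d i * (d i - 1) = 0 := by linear_combination h
        rcases mul_eq_zero.mp hm with h' | h'
        · exact Or.inl h'
        · exact Or.inr (by linear_combination h')
      · exact absurd h hx₀
    by_cases hall : ∀ i, d i = 0
    · exfalso
      have hbot : ∀ i, W i a₀ = ⊥ := by
        intro i
        rw [Submodule.eq_bot_iff]
        intro w hw
        have hw' : P i a₀ w = w := by
          rw [hPapp, orthProj_eq_self_of_mem' _ hw]
        rw [hd i a₀, hall i] at hw'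
        simpa using hw'.symm
      have htop₀ := htop a₀
      simp only [hbot, iSup_bot] at htop₀
      have hxb : x₀ ∈ (⊥ : Submodule ℂ (V a₀)) := by rw [htop₀]; trivial
      exact hx₀ ((Submodule.mem_bot ℂ).mp hxb)
    · push_neg at hall
      obtain ⟨i, hi⟩ := hall
      have hdi : d i = 1 := (hd01 i).resolve_left hi
      refine ⟨i, fun a => ?_⟩
      rw [eq_top_iff]
      intro y _
      have hy : P i a y = y := by rw [hd i a, hdi]; simp
      rw [← hy]
      exact hPmem i a y
  · intro hdec f hfrep hskew
    set g : ∀ a, V a →ₗ[ℂ] V a := fun a => Complex.I • f a with hg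
    have hsym : ∀ a, (g a).IsSymmetric := by
      intro a v w
      simp only [hg, LinearMap.smul_apply]
      rw [inner_smul_left, inner_smul_right, Complex.conj_I]
      have h := hskew a v w
      have h2 : inner (𝕜 := ℂ) (f a v) w = - inner (𝕜 := ℂ) v (f a w) := by
        linear_combination h
      rw [h2]; ring
    have hfin : (⋃ a, {μ : ℂ | Module.End.HasEigenvalue (g a) μ}).Finite :=
      Set.finite_iUnion fun a => Module.End.finite_hasEigenvalue (g a)
    set Λ : Finset ℂ := hfin.toFinset with hΛ
    set n := Λ.card with hn
    set e : Fin n ≃ {x // x ∈ Λ} := Λ.equivFin.symm with he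
    set W : Fin n → ∀ a, Submodule ℂ (V a) := fun i a =>
      Module.End.eigenspace (g a) ((e i : ℂ)) with hW
    have hsub : ∀ i, IsSubrep s t V ρ (W i) := by
      intro i α x hx
      rw [hW] at hx ⊢
      rw [Module.End.mem_eigenspace_iff] at hx ⊢
      have hcomm : g (t α) (ρ α x) = ρ α (g (s α) x) := by
        simp only [hg, LinearMap.smul_apply, map_smul]
        exact congrArg (Complex.I • ·) (LinearMap.congr_fun (hfrep α) x)
      rw [hcomm, hx, map_smul]
    have htop : ∀ a, (⨆ i, W i a) = ⊤ := by
      intro a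
      refine le_antisymm le_top ?_
      have h1 : (⨆ μ : ℂ, Module.End.eigenspace (g a) μ) = ⊤ :=
        Submodule.orthogonal_eq_bot_iff.mp (hsym a).orthogonalComplement_iSup_eigenspaces_eq_bot
      rw [← h1]
      refine iSup_le fun μ => ?_
      by_cases hμ : Module.End.eigenspace (g a) μ = ⊥
      · rw [hμ]; exact bot_le
      · have hev : Module.End.HasEigenvalue (g a) μ :=
          Module.End.hasEigenvalue_iff.mpr hμ
        have hμΛ : μ ∈ Λ := by
          simp only [hΛ, Set.Finite.mem_toFinset, Set.mem_iUnion, Set.mem_setOf_eq]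
          exact ⟨a, hev⟩
        have hei : ((e (e.symm ⟨μ, hμΛ⟩) : ℂ)) = μ := by simp
        exact le_iSup_of_le (e.symm ⟨μ, hμΛ⟩) (le_of_eq (by simp only [hW, hei]))
    have horth : ∀ i j, i ≠ j → OrthSubreps V (W i) (W j) := by
      intro i j hij a v hv w hw
      have hne : ((e i : ℂ)) ≠ ((e j : ℂ)) := fun h =>
        hij (e.injective (Subtype.ext h))
      simp only [hW] at hv hw
      exact (hsym a).orthogonalFamily_eigenspaces hne ⟨v, hv⟩ ⟨w, hw⟩
    obtain ⟨i, hi⟩ := hdec n W hsub htop horth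
    refine ⟨-Complex.I * (e i : ℂ), fun a => ?_⟩
    ext y
    have hy : y ∈ W i a := by rw [hi a]; trivial
    simp only [hW] at hy
    rw [Module.End.mem_eigenspace_iff] at hy
    have h3 : (-Complex.I) • (g a y) = (-Complex.I) • (((e i : ℂ)) • y) := by rw [hy]
    simp only [hg, LinearMap.smul_apply, smul_smul, neg_mul, Complex.I_mul_I, neg_neg,
      one_smul] at h3
    simpa using h3
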